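/- Let A be the matrix (2 1; 0 2) and φ_A(x,y) = (x²y, y²) the associated monomial map on 𝔾_m^2(ℚ̄). Then for all P = (x,y), ĥ_A⁺(P) = limsup_{n→∞} h(φ_A^n(P))/(n·2^n) = h(y)/2. In particular the Northcott finiteness property fails: there are infinitely many P ∈ 𝔾_m^2(ℚ) with ĥ_A⁺(P) = 0. -/

import Mathlib

open Filter NumberField IsDedekindDomain
open scoped Classical

noncomputable section


/-- The logarithm of the normalized absolute value of `a` at the finite place `v` of the
number field `K`:  `log ‖a‖_v = -(additive valuation of a) * log (norm of v)`. -/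
def finVal (K : Type*) [Field K] [NumberField K]
    (v : HeightOneSpectrum (𝓞 K)) (a : K) : ℝ :=
  if h : a = 0 then 0
  else (Multiplicative.toAdd (WithZero.unzero ((v.valuation K).ne_zero_iff.mpr h)) : ℤ) *
    Real.log (Ideal.absNorm v.asIdeal)

/-- The absolute logarithmic Weil height of a tuple of elements of a number field `K`:
`h(P) = Σ_{v ∈ M_K} max {0, log ‖x₁‖_v, …, log ‖x_N‖_v}` with suitably normalized
absolute values. -/
def logHeight (K : Type*) [Field K] [NumberField K] {N : ℕ} (x : Fin N → K) : ℝ :=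
  (Module.finrank ℚ K : ℝ)⁻¹ *
    ((∑ w : InfinitePlace K, (w.mult : ℝ) * ⨆ i, max 0 (Real.log (w (x i)))) +
     ∑ᶠ v : HeightOneSpectrum (𝓞 K), ⨆ i, max 0 (finVal K v (x i)))

/-- The height of a point of `𝔾_m^N(K)`. -/
def uHeight (K : Type*) [Field K] [NumberField K] {N : ℕ} (x : Fin N → Kˣ) : ℝ :=
  logHeight K (fun i => (x i : K))

/-- The monomial map associated to an integer matrix `A`:
`φ_A(x₁,…,x_N) = (∏ x_j^{a_{1j}}, …, ∏ x_j^{a_{Nj}})`. -/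
def phi {G : Type*} [CommGroup G] {N : ℕ} (A : Matrix (Fin N) (Fin N) ℤ)
    (x : Fin N → G) : Fin N → G :=
  fun i => ∏ j, (x j) ^ (A i j)

/-! ### Generic helpers -/

lemma pos_add_le (x y : ℝ) : max 0 (x + y) ≤ max 0 x + max 0 y :=
  max_le (by positivity) (add_le_add (le_max_right _ _) (le_max_right _ _))

lemma pos_le_add (x y : ℝ) : max 0 y ≤ max 0 (x + y) + max 0 (-x) := by
  apply max_le
  · positivity
  · have h1 : x + y ≤ max 0 (x + y) := le_max_right _ _
    have h2 : -x ≤ max 0 (-x) := le_max_right _ _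
    linarith

lemma pos_smul (c x : ℝ) (hc : 0 ≤ c) : max 0 (c * x) = c * max 0 x := by
  rcases le_total x 0 with h | h
  · rw [max_eq_left (by nlinarith), max_eq_left h, mul_zero]
  · rw [max_eq_right (by nlinarith), max_eq_right h]

lemma iSup_fin2 (f : Fin 2 → ℝ) : (⨆ i, f i) = max (f 0) (f 1) := by
  apply le_antisymm
  · apply ciSup_le
    intro i
    fin_cases i
    · exact le_max_left _ _
    · exact le_max_right _ _
  · apply max_le <;> exact le_ciSup (Set.Finite.bddAbove (Set.finite_range f)) _

lemma finsum_mono {ι : Type*} {f g : ι → ℝ} (h : ∀ i, f i ≤ g i)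
    (hf : (Function.support f).Finite) (hg : (Function.support g).Finite) :
    ∑ᶠ i, f i ≤ ∑ᶠ i, g i := by
  rw [finsum_eq_sum_of_support_subset f (s := hf.toFinset ∪ hg.toFinset)
      (by intro x hx
          simp only [Finset.coe_union, Set.Finite.coe_toFinset, Set.mem_union]
          exact Or.inl hx),
    finsum_eq_sum_of_support_subset g (s := hf.toFinset ∪ hg.toFinset)
      (by intro x hx
          simp only [Finset.coe_union, Set.Finite.coe_toFinset, Set.mem_union]
          exact Or.inr hx)]
  exact Finset.sum_le_sum fun i _ => h i

lemma supp_max0 {ι : Type*} (f : ι → ℝ) :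
    Function.support (fun v => max 0 (f v)) ⊆ Function.support f := by
  intro v hv
  simp only [Function.mem_support] at hv ⊢
  intro h
  apply hv
  rw [h]
  simp

lemma supp_pairmax {ι : Type*} (f g : ι → ℝ) :
    Function.support (fun v => max (max 0 (f v)) (max 0 (g v))) ⊆
      Function.support f ∪ Function.support g := by
  intro v hv
  simp only [Function.mem_support] at hv
  simp only [Set.mem_union, Function.mem_support]
  by_contra h
  push_neg at h
  apply hv
  rw [h.1, h.2]
  simp

/-! ### finVal lemmas -/

variable {K : Type*} [Field K] [NumberField K]

lemma finVal_unit (v : HeightOneSpectrum (𝓞 K)) (a : Kˣ) :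
    finVal K v (a : K) =
      (Multiplicative.toAdd (WithZero.unzero ((v.valuation K).ne_zero_iff.mpr a.ne_zero)) : ℤ) *
        Real.log (Ideal.absNorm v.asIdeal) := by
  rw [finVal, dif_neg a.ne_zero]

lemma finVal_mul (v : HeightOneSpectrum (𝓞 K)) (a b : Kˣ) :
    finVal K v ((a * b : Kˣ) : K) = finVal K v (a : K) + finVal K v (b : K) := by
  rw [finVal_unit, finVal_unit, finVal_unit]
  have key : WithZero.unzero ((v.valuation K).ne_zero_iff.mpr (a*b).ne_zero)
      = WithZero.unzero ((v.valuation K).ne_zero_iff.mpr a.ne_zero)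
        * WithZero.unzero ((v.valuation K).ne_zero_iff.mpr b.ne_zero) := by
    apply WithZero.coe_inj.mp
    rw [WithZero.coe_mul, WithZero.coe_unzero, WithZero.coe_unzero, WithZero.coe_unzero,
      Units.val_mul, map_mul]
  rw [key, toAdd_mul]
  push_cast
  ring

lemma finVal_one (v : HeightOneSpectrum (𝓞 K)) : finVal K v ((1 : Kˣ) : K) = 0 := by
  have h := finVal_mul v 1 1
  rw [mul_one] at h
  linarith

lemma finVal_inv (v : HeightOneSpectrum (𝓞 K)) (a : Kˣ) :
    finVal K v ((a⁻¹ : Kˣ) : K) = - finVal K v (a : K) := by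
  have h := finVal_mul v a a⁻¹
  rw [mul_inv_cancel, finVal_one] at h
  linarith

lemma finVal_pow (v : HeightOneSpectrum (𝓞 K)) (a : Kˣ) (m : ℕ) :
    finVal K v ((a ^ m : Kˣ) : K) = m * finVal K v (a : K) := by
  induction m with
  | zero => simpa using finVal_one v
  | succ k ih =>
      rw [pow_succ, finVal_mul, ih]
      push_cast; ring

lemma valuation_ne_one_finite (x : K) (hx : x ≠ 0) :
    {v : HeightOneSpectrum (𝓞 K) | v.valuation K x ≠ 1}.Finite := by
  obtain ⟨a, b, hb, habx⟩ := IsFractionRing.div_surjective (A := 𝓞 K) x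
  have ha : a ≠ 0 := by
    rintro rfl
    simp at habx
    exact hx habx.symm
  have hb0 : b ≠ 0 := nonZeroDivisors.ne_zero hb
  apply Set.Finite.subset ((Ideal.finite_factors (I := Ideal.span {a}) (by
      simpa using ha)).union (Ideal.finite_factors (I := Ideal.span {b}) (by simpa using hb0)))
  intro v hv
  simp only [Set.mem_setOf_eq] at hv
  by_contra hcon
  simp only [Set.mem_union, Set.mem_setOf_eq, not_or] at hcon
  have h1 : v.valuation K ((algebraMap (𝓞 K) K) a) = 1 := by
    rcases lt_or_eq_of_le (v.valuation_le_one (K := K) a) with h | h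
    · exact absurd ((v.valuation_lt_one_iff_dvd (K := K) a).mp h) hcon.1
    · exact h
  have h2 : v.valuation K ((algebraMap (𝓞 K) K) b) = 1 := by
    rcases lt_or_eq_of_le (v.valuation_le_one (K := K) b) with h | h
    · exact absurd ((v.valuation_lt_one_iff_dvd (K := K) b).mp h) hcon.2
    · exact h
  apply hv
  rw [← habx, map_div₀, h1, h2]
  rfl

lemma support_finVal (a : Kˣ) :
    (Function.support fun v : HeightOneSpectrum (𝓞 K) => finVal K v (a : K)).Finite := by
  apply Set.Finite.subset (valuation_ne_one_finite (a : K) a.ne_zero)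
  intro v hv
  simp only [Function.mem_support] at hv
  simp only [Set.mem_setOf_eq]
  intro hval
  apply hv
  rw [finVal, dif_neg a.ne_zero]
  have h1 : WithZero.unzero ((v.valuation K).ne_zero_iff.mpr a.ne_zero) = 1 := by
    apply WithZero.coe_inj.mp
    rw [WithZero.coe_unzero, hval, WithZero.coe_one]
  rw [h1]
  simp

/-! ### height decomposition -/

def archH (a : Kˣ) : ℝ :=
  ∑ w : InfinitePlace K, (w.mult : ℝ) * max 0 (Real.log (w (a : K)))

def finH (a : Kˣ) : ℝ := ∑ᶠ v : HeightOneSpectrum (𝓞 K), max 0 (finVal K v (a : K))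

lemma sfin (a : Kˣ) :
    (Function.support fun v : HeightOneSpectrum (𝓞 K) => max 0 (finVal K v (a : K))).Finite :=
  (support_finVal a).subset (supp_max0 _)

lemma uHeight_single (a : Kˣ) :
    uHeight K ![a] = (Module.finrank ℚ K : ℝ)⁻¹ * (archH a + finH a) := by
  simp [uHeight, logHeight, archH, finH, ciSup_unique]

lemma uHeight_pair (a b : Kˣ) :
    uHeight K ![a, b] = (Module.finrank ℚ K : ℝ)⁻¹ *
      ((∑ w : InfinitePlace K, (w.mult : ℝ) *
          max (max 0 (Real.log (w (a : K)))) (max 0 (Real.log (w (b : K))))) +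
       ∑ᶠ v : HeightOneSpectrum (𝓞 K),
          max (max 0 (finVal K v (a : K))) (max 0 (finVal K v (b : K)))) := by
  simp [uHeight, logHeight, iSup_fin2]

lemma archH_nonneg (a : Kˣ) : 0 ≤ archH a :=
  Finset.sum_nonneg fun w _ => mul_nonneg (by positivity) (le_max_left _ _)

lemma finH_nonneg (a : Kˣ) : 0 ≤ finH a := finsum_nonneg fun v => le_max_left _ _

lemma uHeight_nonneg (a : Kˣ) : 0 ≤ uHeight K ![a] := by
  rw [uHeight_single]
  have := archH_nonneg a
  have := finH_nonneg a
  positivity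

lemma log_infinitePlace_mul (w : InfinitePlace K) (a b : Kˣ) :
    Real.log (w ((a * b : Kˣ) : K)) = Real.log (w (a : K)) + Real.log (w (b : K)) := by
  rw [Units.val_mul, map_mul]
  exact Real.log_mul (NumberField.InfinitePlace.pos_iff.mpr a.ne_zero).ne'
    (NumberField.InfinitePlace.pos_iff.mpr b.ne_zero).ne'

lemma log_infinitePlace_inv (w : InfinitePlace K) (a : Kˣ) :
    Real.log (w ((a⁻¹ : Kˣ) : K)) = - Real.log (w (a : K)) := by
  rw [Units.val_inv_eq_inv_val, map_inv₀, Real.log_inv]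

lemma archH_pow (a : Kˣ) (m : ℕ) : archH (a ^ m) = m * archH a := by
  rw [archH, archH, Finset.mul_sum]
  apply Finset.sum_congr rfl
  intro w _
  rw [Units.val_pow_eq_pow_val, map_pow, Real.log_pow, pos_smul _ _ (by positivity)]
  ring

lemma finH_pow (a : Kˣ) (m : ℕ) : finH (a ^ m) = m * finH a := by
  have h1 : finH (a ^ m) = ∑ᶠ v : HeightOneSpectrum (𝓞 K),
      (m : ℝ) * max 0 (finVal K v (a : K)) := by
    apply finsum_congr
    intro v
    rw [finVal_pow, pos_smul _ _ (by positivity)]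
  rw [h1, finH, ← smul_eq_mul, smul_finsum' _ (sfin a)]
  simp [smul_eq_mul]

lemma uHeight_pow (a : Kˣ) (m : ℕ) : uHeight K ![a ^ m] = m * uHeight K ![a] := by
  rw [uHeight_single, uHeight_single, archH_pow, finH_pow]
  ring

lemma uHeight_one : uHeight K ![(1 : Kˣ)] = 0 := by
  have h := uHeight_pow (K := K) 1 2
  rw [one_pow] at h
  push_cast at h
  linarith

lemma uHeight_pair_le (a b c : Kˣ) :
    uHeight K ![a * b, c] ≤ uHeight K ![a] + uHeight K ![b] + uHeight K ![c] := by
  rw [uHeight_pair, uHeight_single, uHeight_single, uHeight_single]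
  have harch : (∑ w : InfinitePlace K, (w.mult : ℝ) *
      max (max 0 (Real.log (w ((a * b : Kˣ) : K)))) (max 0 (Real.log (w (c : K)))))
      ≤ archH a + archH b + archH c := by
    have step : ∀ w : InfinitePlace K, (w.mult : ℝ) *
        max (max 0 (Real.log (w ((a * b : Kˣ) : K)))) (max 0 (Real.log (w (c : K))))
        ≤ (w.mult : ℝ) * max 0 (Real.log (w (a : K)))
          + ((w.mult : ℝ) * max 0 (Real.log (w (b : K)))
          + (w.mult : ℝ) * max 0 (Real.log (w (c : K)))) := by
      intro w
      rw [← mul_add, ← mul_add]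
      apply mul_le_mul_of_nonneg_left _ (by positivity)
      apply max_le
      · rw [log_infinitePlace_mul]
        have := pos_add_le (Real.log (w (a : K))) (Real.log (w (b : K)))
        have : (0:ℝ) ≤ max 0 (Real.log (w (c : K))) := le_max_left _ _
        linarith [pos_add_le (Real.log (w (a : K))) (Real.log (w (b : K)))]
      · have h1 : (0:ℝ) ≤ max 0 (Real.log (w (a : K))) := le_max_left _ _
        have h2 : (0:ℝ) ≤ max 0 (Real.log (w (b : K))) := le_max_left _ _
        linarith
    calc _ ≤ ∑ w : InfinitePlace K, ((w.mult : ℝ) * max 0 (Real.log (w (a : K)))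
          + ((w.mult : ℝ) * max 0 (Real.log (w (b : K)))
          + (w.mult : ℝ) * max 0 (Real.log (w (c : K))))) := Finset.sum_le_sum fun w _ => step w
      _ = archH a + archH b + archH c := by
          rw [Finset.sum_add_distrib, Finset.sum_add_distrib]
          rw [archH, archH, archH]; ring
  have hfin : (∑ᶠ v : HeightOneSpectrum (𝓞 K),
      max (max 0 (finVal K v ((a * b : Kˣ) : K))) (max 0 (finVal K v (c : K))))
      ≤ finH a + finH b + finH c := by
    have hsupL : (Function.support fun v : HeightOneSpectrum (𝓞 K) =>
        max (max 0 (finVal K v ((a * b : Kˣ) : K))) (max 0 (finVal K v (c : K)))).Finite := by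
      apply Set.Finite.subset ((support_finVal (a*b)).union (support_finVal c))
      exact supp_pairmax _ _
    have hsupR : (Function.support fun v : HeightOneSpectrum (𝓞 K) =>
        max 0 (finVal K v (a : K)) + (max 0 (finVal K v (b : K)) + max 0 (finVal K v (c : K)))).Finite := by
      apply Set.Finite.subset (((sfin a).union (sfin b)).union (sfin c))
      intro v hv
      simp only [Function.mem_support] at hv
      simp only [Set.mem_union, Function.mem_support]
      by_contra hcon
      push_neg at hcon
      apply hv
      rw [hcon.1.1, hcon.1.2, hcon.2]
      ring
    calc _ ≤ ∑ᶠ v : HeightOneSpectrum (𝓞 K), (max 0 (finVal K v (a : K))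
          + (max 0 (finVal K v (b : K)) + max 0 (finVal K v (c : K)))) := by
          apply finsum_mono _ hsupL hsupR
          intro v
          apply max_le
          · rw [finVal_mul]
            have h3 : (0:ℝ) ≤ max 0 (finVal K v (c : K)) := le_max_left _ _
            linarith [pos_add_le (finVal K v (a : K)) (finVal K v (b : K))]
          · have h1 : (0:ℝ) ≤ max 0 (finVal K v (a : K)) := le_max_left _ _
            have h2 : (0:ℝ) ≤ max 0 (finVal K v (b : K)) := le_max_left _ _
            linarith
      _ = finH a + finH b + finH c := by
          rw [finsum_add_distrib (sfin a)
              (Set.Finite.subset ((sfin b).union (sfin c)) (Function.support_add _ _)),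
            finsum_add_distrib (sfin b) (sfin c)]
          rw [finH, finH, finH]; ring
  have hc : (0:ℝ) ≤ (Module.finrank ℚ K : ℝ)⁻¹ := by positivity
  have key := mul_le_mul_of_nonneg_left (add_le_add harch hfin) hc
  have heq : (Module.finrank ℚ K : ℝ)⁻¹ * ((archH a + archH b + archH c) + (finH a + finH b + finH c))
      = (Module.finrank ℚ K : ℝ)⁻¹ * (archH a + finH a) + (Module.finrank ℚ K : ℝ)⁻¹ * (archH b + finH b)
        + (Module.finrank ℚ K : ℝ)⁻¹ * (archH c + finH c) := by ring
  linarith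

lemma le_uHeight_pair (a b c : Kˣ) :
    uHeight K ![b] - uHeight K ![a⁻¹] ≤ uHeight K ![a * b, c] := by
  rw [uHeight_pair, uHeight_single, uHeight_single]
  have harch : archH b ≤ (∑ w : InfinitePlace K, (w.mult : ℝ) *
      max (max 0 (Real.log (w ((a * b : Kˣ) : K)))) (max 0 (Real.log (w (c : K)))))
      + archH a⁻¹ := by
    have step : ∀ w : InfinitePlace K, (w.mult : ℝ) * max 0 (Real.log (w (b : K)))
        ≤ (w.mult : ℝ) *
          max (max 0 (Real.log (w ((a * b : Kˣ) : K)))) (max 0 (Real.log (w (c : K))))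
          + (w.mult : ℝ) * max 0 (Real.log (w ((a⁻¹ : Kˣ) : K))) := by
      intro w
      rw [← mul_add]
      apply mul_le_mul_of_nonneg_left _ (by positivity)
      have h1 := pos_le_add (Real.log (w (a : K))) (Real.log (w (b : K)))
      rw [← log_infinitePlace_mul, ← log_infinitePlace_inv] at h1
      have h2 : max 0 (Real.log (w ((a * b : Kˣ) : K)))
          ≤ max (max 0 (Real.log (w ((a * b : Kˣ) : K)))) (max 0 (Real.log (w (c : K)))) :=
        le_max_left _ _
      linarith
    calc archH b ≤ _ := Finset.sum_le_sum fun w _ => step w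
      _ = _ := by rw [Finset.sum_add_distrib, archH]
  have hfin : finH b ≤ (∑ᶠ v : HeightOneSpectrum (𝓞 K),
      max (max 0 (finVal K v ((a * b : Kˣ) : K))) (max 0 (finVal K v (c : K))))
      + finH a⁻¹ := by
    have hsupM : (Function.support fun v : HeightOneSpectrum (𝓞 K) =>
        max (max 0 (finVal K v ((a * b : Kˣ) : K))) (max 0 (finVal K v (c : K)))).Finite :=
      Set.Finite.subset ((support_finVal (a*b)).union (support_finVal c)) (supp_pairmax _ _)
    have step : ∀ v : HeightOneSpectrum (𝓞 K), max 0 (finVal K v (b : K))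
        ≤ max (max 0 (finVal K v ((a * b : Kˣ) : K))) (max 0 (finVal K v (c : K)))
          + max 0 (finVal K v ((a⁻¹ : Kˣ) : K)) := by
      intro v
      have h1 := pos_le_add (finVal K v (a : K)) (finVal K v (b : K))
      rw [← finVal_mul, ← finVal_inv] at h1
      have h2 : max 0 (finVal K v ((a * b : Kˣ) : K))
          ≤ max (max 0 (finVal K v ((a * b : Kˣ) : K))) (max 0 (finVal K v (c : K))) :=
        le_max_left _ _
      linarith
    calc finH b ≤ ∑ᶠ v : HeightOneSpectrum (𝓞 K),
          (max (max 0 (finVal K v ((a * b : Kˣ) : K))) (max 0 (finVal K v (c : K)))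
            + max 0 (finVal K v ((a⁻¹ : Kˣ) : K))) := by
          apply finsum_mono step (sfin b)
          exact Set.Finite.subset (hsupM.union (sfin a⁻¹)) (Function.support_add _ _)
      _ = _ := by rw [finsum_add_distrib hsupM (sfin a⁻¹), finH]
  have hc : (0:ℝ) ≤ (Module.finrank ℚ K : ℝ)⁻¹ := by positivity
  set A := ∑ w : InfinitePlace K, (w.mult : ℝ) *
      max (max 0 (Real.log (w ((a * b : Kˣ) : K)))) (max 0 (Real.log (w (c : K)))) with hA
  set F := ∑ᶠ v : HeightOneSpectrum (𝓞 K),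
      max (max 0 (finVal K v ((a * b : Kˣ) : K))) (max 0 (finVal K v (c : K))) with hF
  have key := mul_le_mul_of_nonneg_left
    (add_le_add harch hfin : archH b + finH b ≤ (A + archH a⁻¹) + (F + finH a⁻¹)) hc
  have heq : (Module.finrank ℚ K : ℝ)⁻¹ * ((A + archH a⁻¹) + (F + finH a⁻¹))
      = (Module.finrank ℚ K : ℝ)⁻¹ * (A + F)
        + (Module.finrank ℚ K : ℝ)⁻¹ * (archH a⁻¹ + finH a⁻¹) := by ring
  linarith
lemma phi_iterate {G : Type*} [CommGroup G] (P : Fin 2 → G) (n : ℕ) :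
    (phi (!![2, 1; 0, 2] : Matrix (Fin 2) (Fin 2) ℤ))^[n] P
      = ![P 0 ^ (2 ^ n) * P 1 ^ (n * 2 ^ (n - 1)), P 1 ^ (2 ^ n)] := by
  induction n with
  | zero =>
      funext i
      fin_cases i <;> simp
  | succ n ih =>
      rw [Function.iterate_succ_apply', ih]
      have e1 : 2 ^ n * 2 = 2 ^ (n + 1) := (pow_succ 2 n).symm
      have e2 : n * 2 ^ (n - 1) * 2 + 2 ^ n = (n + 1) * 2 ^ (n + 1 - 1) := by
        rcases n with _ | k
        · simp
        · rw [Nat.succ_sub_one, Nat.succ_sub_one, pow_succ]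
          ring
      funext i
      fin_cases i
      · show phi _ _ 0 = _
        simp only [phi, Fin.prod_univ_two, Matrix.cons_val', Matrix.cons_val_zero,
          Matrix.cons_val_one, Matrix.head_cons, Matrix.empty_val', Matrix.cons_val_fin_one,
          Matrix.head_fin_const]
        rw [show ((!![2, 1; 0, 2] : Matrix (Fin 2) (Fin 2) ℤ) 0 0) = 2 from rfl,
          show ((!![2, 1; 0, 2] : Matrix (Fin 2) (Fin 2) ℤ) 0 1) = 1 from rfl]
        rw [zpow_one, show (2:ℤ) = ((2:ℕ):ℤ) from rfl, zpow_natCast]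
        rw [mul_pow, ← pow_mul, ← pow_mul, e1, mul_assoc, ← pow_add, e2]
        simp
      · show phi _ _ 1 = _
        simp only [phi, Fin.prod_univ_two, Matrix.cons_val', Matrix.cons_val_zero,
          Matrix.cons_val_one, Matrix.head_cons, Matrix.empty_val', Matrix.cons_val_fin_one,
          Matrix.head_fin_const]
        rw [show ((!![2, 1; 0, 2] : Matrix (Fin 2) (Fin 2) ℤ) 1 0) = 0 from rfl,
          show ((!![2, 1; 0, 2] : Matrix (Fin 2) (Fin 2) ℤ) 1 1) = 2 from rfl]
        rw [zpow_zero, one_mul, show (2:ℤ) = ((2:ℕ):ℤ) from rfl, zpow_natCast, ← pow_mul, e1]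
        simp

lemma main_tendsto (K : Type) [Field K] [NumberField K] (P : Fin 2 → Kˣ) :
    Tendsto (fun n : ℕ =>
        uHeight K ((phi (!![2, 1; 0, 2] : Matrix (Fin 2) (Fin 2) ℤ))^[n] P) /
          ((n : ℝ) * 2 ^ n)) atTop (nhds (uHeight K ![P 1] / 2)) := by
  set Hx := uHeight K ![P 0] with hHx
  set Hxi := uHeight K ![(P 0)⁻¹] with hHxi
  set Hy := uHeight K ![P 1] with hHy
  have hlow : ∀ n : ℕ, 1 ≤ n →
      Hy / 2 - Hxi * (n:ℝ)⁻¹ ≤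
        uHeight K ((phi (!![2, 1; 0, 2] : Matrix (Fin 2) (Fin 2) ℤ))^[n] P) /
          ((n : ℝ) * 2 ^ n) := by
    intro n hn
    obtain ⟨k, rfl⟩ : ∃ k, n = k + 1 := ⟨n - 1, (Nat.succ_pred_eq_of_pos hn).symm⟩
    rw [phi_iterate]
    have hineq := le_uHeight_pair (P 0 ^ (2 ^ (k+1))) (P 1 ^ ((k+1) * 2 ^ (k+1-1)))
      (P 1 ^ (2 ^ (k+1)))
    rw [← inv_pow, uHeight_pow, uHeight_pow, ← hHxi, ← hHy] at hineq
    have hN : (0:ℝ) < ((k+1 : ℕ):ℝ) * 2 ^ (k+1) := by positivity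
    have hdiv := (div_le_div_iff_of_pos_right hN).mpr hineq
    refine le_trans (le_of_eq ?_) hdiv
    have h2 : (2:ℝ)^(k+1) = 2^k * 2 := pow_succ 2 k
    push_cast [Nat.add_sub_cancel]
    rw [h2]
    have hk1 : ((k:ℝ) + 1) ≠ 0 := by positivity
    field_simp
  have hup : ∀ n : ℕ, 1 ≤ n →
      uHeight K ((phi (!![2, 1; 0, 2] : Matrix (Fin 2) (Fin 2) ℤ))^[n] P) /
          ((n : ℝ) * 2 ^ n) ≤ Hy / 2 + (Hx + Hy) * (n:ℝ)⁻¹ := by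
    intro n hn
    obtain ⟨k, rfl⟩ : ∃ k, n = k + 1 := ⟨n - 1, (Nat.succ_pred_eq_of_pos hn).symm⟩
    rw [phi_iterate]
    have hineq := uHeight_pair_le (P 0 ^ (2 ^ (k+1))) (P 1 ^ ((k+1) * 2 ^ (k+1-1)))
      (P 1 ^ (2 ^ (k+1)))
    rw [uHeight_pow, uHeight_pow, uHeight_pow, ← hHx, ← hHy] at hineq
    have hN : (0:ℝ) < ((k+1 : ℕ):ℝ) * 2 ^ (k+1) := by positivity
    have hdiv := (div_le_div_iff_of_pos_right hN).mpr hineq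
    refine le_trans hdiv (le_of_eq ?_)
    have h2 : (2:ℝ)^(k+1) = 2^k * 2 := pow_succ 2 k
    push_cast [Nat.add_sub_cancel]
    rw [h2]
    have hk1 : ((k:ℝ) + 1) ≠ 0 := by positivity
    field_simp
    ring
  have hinv : Tendsto (fun n : ℕ => ((n:ℝ))⁻¹) atTop (nhds 0) :=
    tendsto_inv_atTop_zero.comp tendsto_natCast_atTop_atTop
  have t1 : Tendsto (fun n : ℕ => Hy / 2 - Hxi * (n:ℝ)⁻¹) atTop (nhds (Hy/2)) := by
    have := (tendsto_const_nhds (x := Hy/2) (f := atTop (α := ℕ))).sub (hinv.const_mul Hxi)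
    simpa using this
  have t2 : Tendsto (fun n : ℕ => Hy / 2 + (Hx + Hy) * (n:ℝ)⁻¹) atTop (nhds (Hy/2)) := by
    have := (tendsto_const_nhds (x := Hy/2) (f := atTop (α := ℕ))).add
      (hinv.const_mul (Hx + Hy))
    simpa using this
  exact tendsto_of_tendsto_of_tendsto_of_le_of_le' t1 t2
    (eventually_atTop.mpr ⟨1, hlow⟩) (eventually_atTop.mpr ⟨1, hup⟩)

/-- For A = (2 1; 0 2), ĥ_A⁺(P) = limsup h(φ_A^n(P))/(n·2ⁿ) = h(y)/2 for P = (x,y).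
In particular Northcott fails: infinitely many P ∈ 𝔾_m²(ℚ) have ĥ_A⁺(P) = 0. -/
theorem statement19 :
    (∀ (K : Type) [Field K] [NumberField K] (P : Fin 2 → Kˣ),
      Filter.limsup
        (fun n : ℕ =>
          uHeight K ((phi (!![2, 1; 0, 2] : Matrix (Fin 2) (Fin 2) ℤ))^[n] P) /
            ((n : ℝ) * 2 ^ n))
        Filter.atTop
      = uHeight K ![P 1] / 2) ∧
    {P : Fin 2 → ℚˣ |
      Filter.limsup
        (fun n : ℕ =>
          uHeight ℚ ((phi (!![2, 1; 0, 2] : Matrix (Fin 2) (Fin 2) ℤ))^[n] P) /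
            ((n : ℝ) * 2 ^ n))
        Filter.atTop = 0}.Infinite := by
  constructor
  · intro K _ _ P
    exact (main_tendsto K P).limsup_eq
  · apply Set.infinite_of_injective_forall_mem
      (f := fun k : ℕ => (![Units.mk0 ((k:ℚ)+1) (by positivity), 1] : Fin 2 → ℚˣ))
    · intro a b hab
      have h0 := congrFun hab 0
      simp only [Matrix.cons_val_zero] at h0
      have : ((a:ℚ)+1) = ((b:ℚ)+1) := by
        have := congrArg Units.val h0
        simpa using this
      have h2 : (a:ℚ) = (b:ℚ) := by linarith
      exact_mod_cast h2
    · intro k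
      simp only [Set.mem_setOf_eq]
      rw [(main_tendsto ℚ _).limsup_eq]
      norm_num [uHeight_one]
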